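/- Let p be an odd prime and consider the permutations of ℤ_4 × ℤ_{2p} given by μ(i,j) = (i+1,j), σν(i,j) = (-i,j+1), and τ(i,j) = (-i,-j), and let H = ⟨μ, σν, τ⟩, a subgroup of the symmetric group on ℤ_4 × ℤ_{2p}. Then the minimal normal subgroups of H are exactly ⟨μ²⟩ and ⟨ν²⟩, where μ² is the permutation (i,j) ↦ (i+2,j) and ν² is (i,j) ↦ (i,j+2). -/

import Mathlib

open SimpleGraph

namespace OG4

variable {V : Type*} {W : Type*}

/-! ### Normal quotients, cycles, and basic pairs -/

/-- The setoid of orbits of a group `N` of permutations of `V`. -/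
def orbitSetoid (N : Subgroup (Equiv.Perm V)) : Setoid V := MulAction.orbitRel N V

/-- The (normal) quotient graph of a graph `Γ` with respect to a group `N` of permutations:
its vertices are the `N`-orbits, two distinct orbits being adjacent iff some vertex of one is
adjacent in `Γ` to some vertex of the other. -/
def quotientGraph (Γ : SimpleGraph V) (N : Subgroup (Equiv.Perm V)) :
    SimpleGraph (Quotient (orbitSetoid N)) :=
  SimpleGraph.fromRel fun a b =>
    ∃ x y : V, Quotient.mk (orbitSetoid N) x = a ∧ Quotient.mk (orbitSetoid N) y = b ∧ Γ.Adj x y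

/-- `N` is a normal subgroup of the subgroup `G` (of some ambient group). -/
def NormalIn {G : Type*} [Group G] (N H : Subgroup G) : Prop :=
  N ≤ H ∧ ∀ h ∈ H, ∀ n ∈ N, h * n * h⁻¹ ∈ N

/-- A graph is isomorphic to a cycle graph `C_m` for some `m ≥ 3`. -/
def IsoCycle (Δ : SimpleGraph W) : Prop :=
  ∃ m : ℕ, 3 ≤ m ∧ Nonempty (Δ ≃g SimpleGraph.cycleGraph m)

/-- Every normal quotient of `(Γ, G)` relative to a nontrivial normal subgroup is degenerate:
it has at most 2 vertices or is a cycle. -/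
def IsBasic (Γ : SimpleGraph V) (G : Subgroup (Equiv.Perm V)) : Prop :=
  ∀ N : Subgroup (Equiv.Perm V), NormalIn N G → N ≠ ⊥ →
    Nat.card (Quotient (orbitSetoid N)) ≤ 2 ∨ IsoCycle (quotientGraph Γ N)

/-- `(Γ, G)` is basic of cycle type. -/
def BasicOfCycleType (Γ : SimpleGraph V) (G : Subgroup (Equiv.Perm V)) : Prop :=
  IsBasic Γ G ∧
    ∃ N : Subgroup (Equiv.Perm V), NormalIn N G ∧ N ≠ ⊥ ∧ IsoCycle (quotientGraph Γ N)

/-- The kernel of the action of `G` on the set of `N`-orbits. -/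
def orbitKernel (G N : Subgroup (Equiv.Perm V)) : Subgroup (Equiv.Perm V) where
  carrier := {g | g ∈ G ∧ ∀ x : V,
    Quotient.mk (orbitSetoid N) (g x) = Quotient.mk (orbitSetoid N) x}
  one_mem' := ⟨G.one_mem, fun x => by simp⟩
  mul_mem' := by
    rintro a b ⟨haG, ha⟩ ⟨hbG, hb⟩
    refine ⟨G.mul_mem haG hbG, fun x => ?_⟩
    rw [Equiv.Perm.mul_apply, ha (b x), hb x]
  inv_mem' := by
    rintro a ⟨haG, ha⟩
    refine ⟨G.inv_mem haG, fun x => ?_⟩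
    have h := ha (a⁻¹ x)
    rw [show a (a⁻¹ x) = x by simp] at h
    exact h.symm

/-- `(Γ, G)` has a pair of independent cyclic normal quotients. -/
def HasIndepCyclicQuotients (Γ : SimpleGraph V) (G : Subgroup (Equiv.Perm V)) : Prop :=
  ∃ N M : Subgroup (Equiv.Perm V), NormalIn N G ∧ NormalIn M G ∧
    IsoCycle (quotientGraph Γ N) ∧ IsoCycle (quotientGraph Γ M) ∧
    ¬ IsoCycle (quotientGraph Γ (orbitKernel G N ⊓ orbitKernel G M))

/-- `(Γ, G)` is basic of independent-cycle type. -/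
def BasicOfIndependentCycleType (Γ : SimpleGraph V) (G : Subgroup (Equiv.Perm V)) : Prop :=
  IsBasic Γ G ∧ HasIndepCyclicQuotients Γ G

/-- Isomorphism of graph-group pairs: a graph isomorphism conjugating one group onto the other. -/
def PairIso (Γ : SimpleGraph V) (G : Subgroup (Equiv.Perm V))
    (Δ : SimpleGraph W) (H : Subgroup (Equiv.Perm W)) : Prop :=
  ∃ e : Γ ≃g Δ, ∀ h : Equiv.Perm W, h ∈ H ↔ ∃ g ∈ G, e.toEquiv.permCongr g = h

/-! ### Minimal normal subgroups -/

/-- `M` is a minimal normal subgroup of the ambient group. -/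
def IsMinimalNormal {G : Type*} [Group G] (M : Subgroup G) : Prop :=
  M.Normal ∧ M ≠ ⊥ ∧ ∀ N : Subgroup G, N.Normal → N ≤ M → N = ⊥ ∨ N = M

/-- `M` is a minimal normal subgroup of the subgroup `H`. -/
def IsMinimalNormalIn {G : Type*} [Group G] (M H : Subgroup G) : Prop :=
  NormalIn M H ∧ M ≠ ⊥ ∧ ∀ N : Subgroup G, NormalIn N H → N ≤ M → N = ⊥ ∨ N = M

/-! ### The graphs `Γ(r,s)` and their automorphisms -/

/-- In `Γ(r,s)`, the vertex `(i,j)` is joined to the four vertices `(i ± 1, j ± 1)`. -/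
def gammaRel (r s : ℕ) (x y : ZMod r × ZMod s) : Prop :=
  (y.1 = x.1 + 1 ∨ y.1 = x.1 - 1) ∧ (y.2 = x.2 + 1 ∨ y.2 = x.2 - 1)

/-- The graph `Γ(r,s)` on `ℤ_r × ℤ_s`. -/
def Gamma (r s : ℕ) : SimpleGraph (ZMod r × ZMod s) := SimpleGraph.fromRel (gammaRel r s)

/-- `μ : (i,j) ↦ (i+1, j)`. -/
def mu (r s : ℕ) : Equiv.Perm (ZMod r × ZMod s) :=
  (Equiv.addRight (1 : ZMod r)).prodCongr (Equiv.refl (ZMod s))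

/-- `ν : (i,j) ↦ (i, j+1)`. -/
def nu (r s : ℕ) : Equiv.Perm (ZMod r × ZMod s) :=
  (Equiv.refl (ZMod r)).prodCongr (Equiv.addRight (1 : ZMod s))

/-- `σ : (i,j) ↦ (-i, j)`. -/
def sigma (r s : ℕ) : Equiv.Perm (ZMod r × ZMod s) :=
  (Equiv.neg (ZMod r)).prodCongr (Equiv.refl (ZMod s))

/-- `τ : (i,j) ↦ (-i, -j)`. -/
def tau (r s : ℕ) : Equiv.Perm (ZMod r × ZMod s) :=
  (Equiv.neg (ZMod r)).prodCongr (Equiv.neg (ZMod s))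

/-- `σν : (i,j) ↦ (-i, j+1)`. -/
def sigmaNu (r s : ℕ) : Equiv.Perm (ZMod r × ZMod s) :=
  (Equiv.neg (ZMod r)).prodCongr (Equiv.addRight (1 : ZMod s))

/-- `μν : (i,j) ↦ (i+1, j+1)`. -/
def muNu (r s : ℕ) : Equiv.Perm (ZMod r × ZMod s) :=
  (Equiv.addRight (1 : ZMod r)).prodCongr (Equiv.addRight (1 : ZMod s))

/-- `σμν : (i,j) ↦ (-(i+1), j+1)`. -/
def sigmaMuNu (r s : ℕ) : Equiv.Perm (ZMod r × ZMod s) :=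
  ((Equiv.addRight (1 : ZMod r)).trans (Equiv.neg (ZMod r))).prodCongr
    (Equiv.addRight (1 : ZMod s))

/-- `μ² : (i,j) ↦ (i+2, j)`. -/
def muSq (r s : ℕ) : Equiv.Perm (ZMod r × ZMod s) :=
  (Equiv.addRight (2 : ZMod r)).prodCongr (Equiv.refl (ZMod s))

/-- `ν² : (i,j) ↦ (i, j+2)`. -/
def nuSq (r s : ℕ) : Equiv.Perm (ZMod r × ZMod s) :=
  (Equiv.refl (ZMod r)).prodCongr (Equiv.addRight (2 : ZMod s))

/-- `μ^k : (i,j) ↦ (i+k, j)`. -/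
def muPow (r s k : ℕ) : Equiv.Perm (ZMod r × ZMod s) :=
  (Equiv.addRight ((k : ZMod r))).prodCongr (Equiv.refl (ZMod s))

/-- `μ^k ν² : (i,j) ↦ (i+k, j+2)`. -/
def muPowNuSq (r s k : ℕ) : Equiv.Perm (ZMod r × ZMod s) :=
  (Equiv.addRight ((k : ZMod r))).prodCongr (Equiv.addRight (2 : ZMod s))

/-- `G(r,s) = ⟨μ, ν, σ⟩`. -/
def Ggroup (r s : ℕ) : Subgroup (Equiv.Perm (ZMod r × ZMod s)) :=
  Subgroup.closure {mu r s, nu r s, sigma r s}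

/-- `H(r,s) = ⟨μ, σν, τ⟩`. -/
def Hgroup (r s : ℕ) : Subgroup (Equiv.Perm (ZMod r × ZMod s)) :=
  Subgroup.closure {mu r s, sigmaNu r s, tau r s}

/-! ### The graphs `Γ⁺(r,s)` (for `r`, `s` even) -/

/-- `X⁺`: the set of `(i,j)` with `i` and `j` of the same parity. -/
def XPlus (r s : ℕ) : Set (ZMod r × ZMod s) := {x | x.1.val % 2 = x.2.val % 2}

/-- `Γ⁺(r,s)`, the subgraph of `Γ(r,s)` induced on `X⁺`. -/
def GammaPlus (r s : ℕ) : SimpleGraph (XPlus r s) :=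
  SimpleGraph.induce (XPlus r s) (Gamma r s)

section parity

lemma val_add_one_mod_two (r : ℕ) (hr : 2 ∣ r) (hr0 : r ≠ 0) (i : ZMod r) :
    (i + 1).val % 2 = (i.val + 1) % 2 := by
  haveI : NeZero r := ⟨hr0⟩
  haveI : Fact (1 < r) := ⟨by have := Nat.le_of_dvd (Nat.pos_of_ne_zero hr0) hr; omega⟩
  rw [ZMod.val_add, Nat.mod_mod_of_dvd _ hr, ZMod.val_one]

lemma val_add_two_mod_two (r : ℕ) (hr : 2 ∣ r) (hr0 : r ≠ 0) (i : ZMod r) :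
    (i + 2).val % 2 = i.val % 2 := by
  have h1 := val_add_one_mod_two r hr hr0 i
  have h2 := val_add_one_mod_two r hr hr0 (i + 1)
  rw [show i + 1 + 1 = i + 2 by ring] at h2
  omega

lemma val_neg_mod_two (r : ℕ) (hr : 2 ∣ r) (hr0 : r ≠ 0) (i : ZMod r) :
    (-i).val % 2 = i.val % 2 := by
  haveI : NeZero r := ⟨hr0⟩
  rcases eq_or_ne i 0 with h | h
  · simp [h]
  · have h1 : (-i).val = r - i.val := by rw [ZMod.neg_val]; simp [h]
    have h2 : i.val < r := ZMod.val_lt i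
    have h3 : i.val ≠ 0 := fun hh => h ((ZMod.val_eq_zero i).mp hh)
    obtain ⟨t, rfl⟩ := hr
    rw [h1]
    omega

end parity

section plusPerms

variable (r s : ℕ)

/-- The restriction of `μ²` to `X⁺`. -/
def muSqP (hr : 2 ∣ r) (hr0 : r ≠ 0) : Equiv.Perm (XPlus r s) :=
  (muSq r s).subtypePerm (by
    intro x
    have h := val_add_two_mod_two r hr hr0 x.1
    simp only [XPlus, Set.mem_setOf_eq, muSq, Equiv.prodCongr_apply, Prod.map,
      Equiv.coe_addRight, Equiv.refl_apply]
    omega)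

/-- The restriction of `ν²` to `X⁺`. -/
def nuSqP (hs : 2 ∣ s) (hs0 : s ≠ 0) : Equiv.Perm (XPlus r s) :=
  (nuSq r s).subtypePerm (by
    intro x
    have h := val_add_two_mod_two s hs hs0 x.2
    simp only [XPlus, Set.mem_setOf_eq, nuSq, Equiv.prodCongr_apply, Prod.map,
      Equiv.coe_addRight, Equiv.refl_apply]
    omega)

/-- The restriction of `μν` to `X⁺`. -/
def muNuP (hr : 2 ∣ r) (hr0 : r ≠ 0) (hs : 2 ∣ s) (hs0 : s ≠ 0) : Equiv.Perm (XPlus r s) :=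
  (muNu r s).subtypePerm (by
    intro x
    have h1 := val_add_one_mod_two r hr hr0 x.1
    have h2 := val_add_one_mod_two s hs hs0 x.2
    simp only [XPlus, Set.mem_setOf_eq, muNu, Equiv.prodCongr_apply, Prod.map,
      Equiv.coe_addRight]
    omega)

/-- The restriction of `σ` to `X⁺`. -/
def sigmaP (hr : 2 ∣ r) (hr0 : r ≠ 0) : Equiv.Perm (XPlus r s) :=
  (sigma r s).subtypePerm (by
    intro x
    have h := val_neg_mod_two r hr hr0 x.1
    simp only [XPlus, Set.mem_setOf_eq, sigma, Equiv.prodCongr_apply, Prod.map,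
      Equiv.neg_apply, Equiv.refl_apply]
    omega)

/-- The restriction of `τ` to `X⁺`. -/
def tauP (hr : 2 ∣ r) (hr0 : r ≠ 0) (hs : 2 ∣ s) (hs0 : s ≠ 0) : Equiv.Perm (XPlus r s) :=
  (tau r s).subtypePerm (by
    intro x
    have h1 := val_neg_mod_two r hr hr0 x.1
    have h2 := val_neg_mod_two s hs hs0 x.2
    simp only [XPlus, Set.mem_setOf_eq, tau, Equiv.prodCongr_apply, Prod.map,
      Equiv.neg_apply]
    omega)

/-- The restriction of `σμν` to `X⁺`. -/
def sigmaMuNuP (hr : 2 ∣ r) (hr0 : r ≠ 0) (hs : 2 ∣ s) (hs0 : s ≠ 0) :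
    Equiv.Perm (XPlus r s) :=
  (sigmaMuNu r s).subtypePerm (by
    intro x
    have h1 := val_neg_mod_two r hr hr0 (x.1 + 1)
    have h2 := val_add_one_mod_two r hr hr0 x.1
    have h3 := val_add_one_mod_two s hs hs0 x.2
    simp only [XPlus, Set.mem_setOf_eq, sigmaMuNu, Equiv.prodCongr_apply, Prod.map,
      Equiv.trans_apply, Equiv.coe_addRight, Equiv.neg_apply]
    omega)

/-- `G⁺(r,s) = ⟨μ², μν, σ⟩` acting on `X⁺`. -/
def GPlusGroup (hr : 2 ∣ r) (hr0 : r ≠ 0) (hs : 2 ∣ s) (hs0 : s ≠ 0) :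
    Subgroup (Equiv.Perm (XPlus r s)) :=
  Subgroup.closure {muSqP r s hr hr0, muNuP r s hr hr0 hs hs0, sigmaP r s hr hr0}

/-- `H⁺(r,s) = ⟨μ², σμν, τ⟩` acting on `X⁺`. -/
def HPlusGroup (hr : 2 ∣ r) (hr0 : r ≠ 0) (hs : 2 ∣ s) (hs0 : s ≠ 0) :
    Subgroup (Equiv.Perm (XPlus r s)) :=
  Subgroup.closure
    {muSqP r s hr hr0, sigmaMuNuP r s hr hr0 hs hs0, tauP r s hr hr0 hs hs0}

end plusPerms

/-! ### The standard double cover `Γ₂(r,s)` -/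

/-- Adjacency of the double cover: `(i,j)_δ ~ (i ± 1, j ± 1)_{δ+1}`. -/
def gamma2Rel (r s : ℕ) (x y : (ZMod r × ZMod s) × ZMod 2) : Prop :=
  (y.1.1 = x.1.1 + 1 ∨ y.1.1 = x.1.1 - 1) ∧ (y.1.2 = x.1.2 + 1 ∨ y.1.2 = x.1.2 - 1) ∧
    y.2 = x.2 + 1

/-- `Γ₂(r,s)`, the standard double cover of `Γ(r,s)`. -/
def Gamma2 (r s : ℕ) : SimpleGraph ((ZMod r × ZMod s) × ZMod 2) :=
  SimpleGraph.fromRel (gamma2Rel r s)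

/-- `μ : (i,j)_δ ↦ (i+1, j)_δ` on the double cover. -/
def muD (r s : ℕ) : Equiv.Perm ((ZMod r × ZMod s) × ZMod 2) :=
  (mu r s).prodCongr (Equiv.refl (ZMod 2))

/-- `ν : (i,j)_δ ↦ (i, j+1)_δ` on the double cover. -/
def nuD (r s : ℕ) : Equiv.Perm ((ZMod r × ZMod s) × ZMod 2) :=
  (nu r s).prodCongr (Equiv.refl (ZMod 2))

/-- `σ : (i,j)_δ ↦ (i, -j)_{δ+1}` on the double cover. -/
def sigmaD (r s : ℕ) : Equiv.Perm ((ZMod r × ZMod s) × ZMod 2) :=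
  ((Equiv.refl (ZMod r)).prodCongr (Equiv.neg (ZMod s))).prodCongr
    (Equiv.addRight (1 : ZMod 2))

/-- `τ : (i,j)_δ ↦ (-i, -j)_δ` on the double cover. -/
def tauD (r s : ℕ) : Equiv.Perm ((ZMod r × ZMod s) × ZMod 2) :=
  (tau r s).prodCongr (Equiv.refl (ZMod 2))

/-- `G₂(r,s) = ⟨μ, ν, σ, τ⟩` on the double cover. -/
def G2group (r s : ℕ) : Subgroup (Equiv.Perm ((ZMod r × ZMod s) × ZMod 2)) :=
  Subgroup.closure {muD r s, nuD r s, sigmaD r s, tauD r s}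



/-! ### Auxiliary infrastructure for stmt18 -/

section Aux18

/-- sign permutation: negation or identity. -/
def sgn (n : ℕ) : Bool → Equiv.Perm (ZMod n)
  | true => Equiv.neg _
  | false => Equiv.refl _

/-- generic "affine" permutation `(i,j) ↦ (±i + c, ±j + d)`. -/
def aff (r s : ℕ) (ε η : Bool) (c : ZMod r) (d : ZMod s) :
    Equiv.Perm (ZMod r × ZMod s) :=
  ((sgn r ε).trans (Equiv.addRight c)).prodCongr ((sgn s η).trans (Equiv.addRight d))

variable {r s : ℕ}

lemma sgn_apply (n : ℕ) (ε : Bool) (x : ZMod n) : sgn n ε x = cond ε (-x) x := by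
  cases ε <;> rfl

lemma aff_apply (ε η : Bool) (c : ZMod r) (d : ZMod s) (x : ZMod r × ZMod s) :
    aff r s ε η c d x = (cond ε (-x.1) x.1 + c, cond η (-x.2) x.2 + d) := by
  cases ε <;> cases η <;> rfl

lemma aff_mul (ε η ε' η' : Bool) (c : ZMod r) (d : ZMod s) (c' : ZMod r) (d' : ZMod s) :
    aff r s ε η c d * aff r s ε' η' c' d' =
      aff r s (xor ε ε') (xor η η') (cond ε (-c') c' + c) (cond η (-d') d' + d) := by
  refine Equiv.ext fun x => ?_
  simp only [Equiv.Perm.mul_apply, aff_apply]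
  cases ε <;> cases ε' <;> cases η <;> cases η' <;>
    simp only [Bool.cond_true, Bool.cond_false, Bool.xor_false, Bool.xor_true,
      Bool.not_true, Bool.not_false, Prod.mk.injEq] <;> constructor <;> ring

lemma aff_one : aff r s false false 0 0 = 1 := by
  refine Equiv.ext fun x => ?_
  simp [aff_apply]

lemma aff_inv (ε η : Bool) (c : ZMod r) (d : ZMod s) :
    (aff r s ε η c d)⁻¹ = aff r s ε η (cond ε c (-c)) (cond η d (-d)) := by
  refine inv_eq_of_mul_eq_one_right ?_
  rw [aff_mul]
  cases ε <;> cases η <;> simp [aff_one]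

lemma aff_pow (c : ZMod r) (d : ZMod s) (m : ℕ) :
    (aff r s false false c d) ^ m = aff r s false false (m * c) (m * d) := by
  induction m with
  | zero => simp [aff_one]
  | succ n ih =>
      rw [pow_succ, ih, aff_mul]
      simp only [Bool.xor_false, Bool.cond_false]
      congr 1 <;> push_cast <;> ring

lemma aff_zpow (c : ZMod r) (d : ZMod s) (k : ℤ) :
    (aff r s false false c d) ^ k =
      aff r s false false ((k : ZMod r) * c) ((k : ZMod s) * d) := by
  cases k with
  | ofNat n =>
      rw [Int.ofNat_eq_coe, zpow_natCast, aff_pow]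
      push_cast
      rfl
  | negSucc n =>
      rw [zpow_negSucc, aff_pow, aff_inv]
      simp only [Int.cast_negSucc, Bool.cond_false]
      congr 1 <;> push_cast <;> ring

lemma mu_eq : mu r s = aff r s false false 1 0 := by
  refine Equiv.ext fun x => ?_
  obtain ⟨i, j⟩ := x
  simp [mu, aff_apply]

lemma sigmaNu_eq : sigmaNu r s = aff r s true false 0 1 := by
  refine Equiv.ext fun x => ?_
  obtain ⟨i, j⟩ := x
  simp [sigmaNu, aff_apply]

lemma tau_eq : tau r s = aff r s true true 0 0 := by
  refine Equiv.ext fun x => ?_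
  obtain ⟨i, j⟩ := x
  simp [tau, aff_apply]

lemma muSq_eq : muSq r s = aff r s false false 2 0 := by
  refine Equiv.ext fun x => ?_
  obtain ⟨i, j⟩ := x
  simp [muSq, aff_apply]

lemma nuSq_eq : nuSq r s = aff r s false false 0 2 := by
  refine Equiv.ext fun x => ?_
  obtain ⟨i, j⟩ := x
  simp [nuSq, aff_apply]

end Aux18
section Main18

lemma val_add_mod_two' {n : ℕ} (hn : 2 ∣ n) (h0 : n ≠ 0) (x y : ZMod n) :
    (x + y).val % 2 = (x.val + y.val) % 2 := by
  haveI : NeZero n := ⟨h0⟩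
  rw [ZMod.val_add, Nat.mod_mod_of_dvd _ hn]

lemma mu_mem (r s : ℕ) : mu r s ∈ Hgroup r s :=
  Subgroup.subset_closure (Set.mem_insert _ _)

lemma sigmaNu_mem (r s : ℕ) : sigmaNu r s ∈ Hgroup r s :=
  Subgroup.subset_closure (Set.mem_insert_of_mem _ (Set.mem_insert _ _))

lemma tau_mem (r s : ℕ) : tau r s ∈ Hgroup r s :=
  Subgroup.subset_closure (Set.mem_insert_of_mem _ (Set.mem_insert_of_mem _ rfl))

lemma sigmaNu_mul_self (r s : ℕ) : sigmaNu r s * sigmaNu r s = nuSq r s := by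
  rw [sigmaNu_eq, nuSq_eq, aff_mul]
  norm_num

lemma mu_mul_self (r s : ℕ) : mu r s * mu r s = muSq r s := by
  rw [mu_eq, muSq_eq, aff_mul]
  norm_num

lemma nuSq_mem (r s : ℕ) : nuSq r s ∈ Hgroup r s := by
  rw [← sigmaNu_mul_self]; exact mul_mem (sigmaNu_mem r s) (sigmaNu_mem r s)

lemma muSq_mem (r s : ℕ) : muSq r s ∈ Hgroup r s := by
  rw [← mu_mul_self]; exact mul_mem (mu_mem r s) (mu_mem r s)

variable {p : ℕ}

lemma p_ge_three (hp : p.Prime) (hpo : Odd p) : 3 ≤ p := by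
  obtain ⟨k, hk⟩ := hpo
  have := hp.two_le
  omega

/-- Every element of `H(4,2p)` is affine with parity constraint. -/
lemma mem_H_aff (hp : p.Prime) (hpo : Odd p) (g : Equiv.Perm (ZMod 4 × ZMod (2 * p)))
    (hg : g ∈ Hgroup 4 (2 * p)) :
    ∃ (ε η : Bool) (c : ZMod 4) (d : ZMod (2 * p)),
      g = aff 4 (2 * p) ε η c d ∧ d.val % 2 = (if ε = η then 0 else 1) := by
  have hp3 := p_ge_three hp hpo
  haveI : NeZero (2 * p) := ⟨by omega⟩
  haveI : Fact (1 < 2 * p) := ⟨by omega⟩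
  have hdvd : (2 : ℕ) ∣ 2 * p := ⟨p, rfl⟩
  have h0 : (2 * p : ℕ) ≠ 0 := by omega
  induction hg using Subgroup.closure_induction with
  | mem x hx =>
      simp only [Set.mem_insert_iff, Set.mem_singleton_iff] at hx
      rcases hx with rfl | rfl | rfl
      · exact ⟨false, false, 1, 0, mu_eq, by simp⟩
      · exact ⟨true, false, 0, 1, sigmaNu_eq, by simp [ZMod.val_one]⟩
      · exact ⟨true, true, 0, 0, tau_eq, by simp⟩
  | one => exact ⟨false, false, 0, 0, aff_one.symm, by simp⟩
  | mul x y hx hy ihx ihy =>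
      obtain ⟨ε, η, c, d, rfl, hd⟩ := ihx
      obtain ⟨ε', η', c', d', rfl, hd'⟩ := ihy
      refine ⟨xor ε ε', xor η η', _, _, aff_mul .., ?_⟩
      have h1 := val_add_mod_two' hdvd h0 (cond η (-d') d') d
      have h2 := val_neg_mod_two (2 * p) hdvd h0 d'
      cases ε <;> cases ε' <;> cases η <;> cases η' <;>
        simp_all <;> omega
  | inv x hx ihx =>
      obtain ⟨ε, η, c, d, rfl, hd⟩ := ihx
      refine ⟨ε, η, _, _, aff_inv .., ?_⟩
      have h2 := val_neg_mod_two (2 * p) hdvd h0 d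
      cases ε <;> cases η <;> simp_all

lemma exists_nat_mul_eq_two (hp : p.Prime) (hpo : Odd p) (e : ZMod (2 * p))
    (he : e ≠ 0) (hpar : e.val % 2 = 0) : ∃ m : ℕ, (m : ZMod (2 * p)) * e = 2 := by
  have hp3 := p_ge_three hp hpo
  haveI : NeZero (2 * p) := ⟨by omega⟩
  haveI : Fact p.Prime := ⟨hp⟩
  have hv1 : e.val < 2 * p := ZMod.val_lt e
  have hv0 : e.val ≠ 0 := fun h => he ((ZMod.val_eq_zero e).mp h)
  set f := e.val / 2 with hf
  have hvf : e.val = 2 * f := by omega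
  have hfp : ¬ p ∣ f := by
    intro h
    have := Nat.le_of_dvd (by omega) h
    omega
  have hf0 : (f : ZMod p) ≠ 0 := by
    rw [Ne, ZMod.natCast_eq_zero_iff]
    exact hfp
  set m := ((f : ZMod p)⁻¹).val with hm
  have hmf : ((m * f : ℕ) : ZMod p) = ((1 : ℕ) : ZMod p) := by
    push_cast
    rw [hm, ZMod.natCast_zmod_val]
    rw [inv_mul_cancel₀ hf0]
  rw [ZMod.natCast_eq_natCast_iff'] at hmf
  have h1p : 1 % p = 1 := Nat.one_mod_eq_one.mpr (by omega)
  have hdm := Nat.div_add_mod (m * f) p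
  set t := m * f / p with ht
  have hmft : m * f = p * t + 1 := by omega
  refine ⟨m, ?_⟩
  have he' : ((e.val : ℕ) : ZMod (2 * p)) = e := ZMod.natCast_zmod_val e
  have hmv : m * e.val = 2 * p * t + 2 := by
    rw [hvf]
    calc m * (2 * f) = 2 * (m * f) := by ring
    _ = 2 * (p * t + 1) := by rw [hmft]
    _ = 2 * p * t + 2 := by ring
  have hz : (2 : ZMod (2 * p)) * (p : ZMod (2 * p)) = 0 := by
    have h := ZMod.natCast_self (2 * p)
    push_cast at h
    exact h
  calc (m : ZMod (2 * p)) * e = ((m * e.val : ℕ) : ZMod (2 * p)) := by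
        rw [Nat.cast_mul, he']
    _ = ((2 * p * t + 2 : ℕ) : ZMod (2 * p)) := by rw [hmv]
    _ = 2 := by
        push_cast
        rw [hz]
        simp

/-- Extraction: any subgroup containing a nontrivial even vertical translation contains ν². -/
lemma extract_nuSq (hp : p.Prime) (hpo : Odd p) (e : ZMod (2 * p))
    (he : e ≠ 0) (hpar : e.val % 2 = 0)
    (N : Subgroup (Equiv.Perm (ZMod 4 × ZMod (2 * p))))
    (hmem : aff 4 (2 * p) false false 0 e ∈ N) : nuSq 4 (2 * p) ∈ N := by
  obtain ⟨m, hm⟩ := exists_nat_mul_eq_two hp hpo e he hpar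
  have : (aff 4 (2 * p) false false 0 e) ^ m = nuSq 4 (2 * p) := by
    rw [aff_pow, nuSq_eq, mul_zero, hm]
  rw [← this]
  exact pow_mem hmem m

end Main18
section Main2

variable {r s : ℕ}

lemma conj_mu_comm (η : Bool) (c : ZMod r) (d : ZMod s) :
    mu r s * aff r s true η c d * (mu r s)⁻¹ * (aff r s true η c d)⁻¹ = muSq r s := by
  rw [mu_eq, muSq_eq, aff_inv, aff_inv]
  refine Equiv.ext fun x => ?_
  obtain ⟨i, j⟩ := x
  simp only [Equiv.Perm.mul_apply, aff_apply]
  cases η <;>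
    simp only [Bool.cond_true, Bool.cond_false, Prod.mk.injEq] <;> constructor <;> ring

lemma conj_nu_comm (c : ZMod r) (d : ZMod s) :
    nuSq r s * aff r s false true c d * (nuSq r s)⁻¹ * (aff r s false true c d)⁻¹ =
      aff r s false false 0 4 := by
  rw [nuSq_eq, aff_inv, aff_inv]
  refine Equiv.ext fun x => ?_
  obtain ⟨i, j⟩ := x
  simp only [Equiv.Perm.mul_apply, aff_apply]
  simp only [Bool.cond_true, Bool.cond_false, Prod.mk.injEq]
  constructor <;> ring

lemma conj_trans (c : ZMod r) (d : ZMod s) :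
    sigmaNu r s * aff r s false false c d * (sigmaNu r s)⁻¹ * aff r s false false c d =
      aff r s false false 0 (2 * d) := by
  rw [sigmaNu_eq, aff_inv]
  refine Equiv.ext fun x => ?_
  obtain ⟨i, j⟩ := x
  simp only [Equiv.Perm.mul_apply, aff_apply]
  simp only [Bool.cond_true, Bool.cond_false, Prod.mk.injEq]
  constructor <;> ring

lemma conj_muSq_aff (ε η : Bool) (c : ZMod 4) (d : ZMod s) :
    aff 4 s ε η c d * muSq 4 s * (aff 4 s ε η c d)⁻¹ = muSq 4 s := by
  have h42 : (-2 : ZMod 4) = 2 := by decide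
  rw [muSq_eq, aff_inv]
  refine Equiv.ext fun x => ?_
  obtain ⟨i, j⟩ := x
  simp only [Equiv.Perm.mul_apply, aff_apply]
  cases ε <;> cases η <;>
    simp only [Bool.cond_true, Bool.cond_false, Prod.mk.injEq] <;> constructor <;>
    first
      | ring1
      | rw [h42]
      | (ring_nf; rw [h42])

lemma conj_nuSq_aff (ε η : Bool) (c : ZMod r) (d : ZMod s) :
    aff r s ε η c d * nuSq r s * (aff r s ε η c d)⁻¹ =
      aff r s false false 0 (cond η (-2) 2) := by
  rw [nuSq_eq, aff_inv]
  refine Equiv.ext fun x => ?_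
  obtain ⟨i, j⟩ := x
  simp only [Equiv.Perm.mul_apply, aff_apply]
  cases ε <;> cases η <;>
    simp only [Bool.cond_true, Bool.cond_false, Prod.mk.injEq] <;> constructor <;> ring

lemma nuSq_inv : (nuSq r s)⁻¹ = aff r s false false 0 (-2) := by
  rw [nuSq_eq, aff_inv]
  norm_num

end Main2
section Main3

variable {p : ℕ}

lemma muSq_ne_one : muSq 4 (2 * p) ≠ 1 := by
  intro h
  rw [muSq_eq] at h
  have h2 := DFunLike.congr_fun h ((0 : ZMod 4), (0 : ZMod (2 * p)))
  rw [aff_apply] at h2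
  simp only [Equiv.Perm.coe_one, id_eq, Bool.cond_false, zero_add, add_zero,
    Prod.mk.injEq] at h2
  exact absurd h2.1 (by decide)

lemma nuSq_ne_one (hp : p.Prime) (hpo : Odd p) : nuSq 4 (2 * p) ≠ 1 := by
  have hp3 := p_ge_three hp hpo
  haveI : NeZero (2 * p) := ⟨by omega⟩
  intro h
  rw [nuSq_eq] at h
  have h2 := DFunLike.congr_fun h ((0 : ZMod 4), (0 : ZMod (2 * p)))
  rw [aff_apply] at h2
  simp only [Equiv.Perm.coe_one, id_eq, Bool.cond_false, zero_add, add_zero,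
    Prod.mk.injEq] at h2
  have h3 : (2 : ZMod (2 * p)) = 0 := h2.2
  have h4 : ((2 : ℕ) : ZMod (2 * p)) = (2 : ZMod (2 * p)) := by norm_cast
  have h5 : ((2 : ℕ) : ZMod (2 * p)).val = 2 := ZMod.val_natCast_of_lt (by omega)
  rw [h4, h3] at h5
  simp at h5

lemma closure_singleton_ne_bot {G : Type*} [Group G] {x : G} (hx : x ≠ 1) :
    Subgroup.closure {x} ≠ ⊥ := by
  intro h
  have hm : x ∈ Subgroup.closure {x} := Subgroup.subset_closure rfl
  rw [h, Subgroup.mem_bot] at hm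
  exact hx hm

lemma normalIn_closure_muSq (hp : p.Prime) (hpo : Odd p) :
    NormalIn (Subgroup.closure {muSq 4 (2 * p)}) (Hgroup 4 (2 * p)) := by
  constructor
  · rw [Subgroup.closure_le]
    simpa using muSq_mem 4 (2 * p)
  · intro h hh n hn
    obtain ⟨ε, η, c, d, rfl, -⟩ := mem_H_aff hp hpo h hh
    rw [← Subgroup.zpowers_eq_closure] at hn ⊢
    obtain ⟨k, rfl⟩ := Subgroup.mem_zpowers_iff.mp hn
    rw [← conj_zpow, conj_muSq_aff]
    exact zpow_mem (Subgroup.mem_zpowers _) k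

lemma normalIn_closure_nuSq (hp : p.Prime) (hpo : Odd p) :
    NormalIn (Subgroup.closure {nuSq 4 (2 * p)}) (Hgroup 4 (2 * p)) := by
  constructor
  · rw [Subgroup.closure_le]
    simpa using nuSq_mem 4 (2 * p)
  · intro h hh n hn
    obtain ⟨ε, η, c, d, rfl, -⟩ := mem_H_aff hp hpo h hh
    rw [← Subgroup.zpowers_eq_closure] at hn ⊢
    obtain ⟨k, rfl⟩ := Subgroup.mem_zpowers_iff.mp hn
    rw [← conj_zpow, conj_nuSq_aff]
    cases η
    · rw [show (cond false (-2 : ZMod (2 * p)) 2) = 2 from rfl, ← nuSq_eq]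
      exact zpow_mem (Subgroup.mem_zpowers _) k
    · rw [show (cond true (-2 : ZMod (2 * p)) 2) = -2 from rfl, ← nuSq_inv]
      exact zpow_mem (inv_mem (Subgroup.mem_zpowers _)) k

lemma eq_closure_muSq (N : Subgroup (Equiv.Perm (ZMod 4 × ZMod (2 * p))))
    (hle : N ≤ Subgroup.closure {muSq 4 (2 * p)}) (hbot : N ≠ ⊥) :
    N = Subgroup.closure {muSq 4 (2 * p)} := by
  obtain ⟨g, hgN, hg1⟩ := (Subgroup.bot_or_exists_ne_one N).resolve_left hbot
  have hg := hle hgN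
  rw [← Subgroup.zpowers_eq_closure, Subgroup.mem_zpowers_iff] at hg
  obtain ⟨k, hk⟩ := hg
  rw [muSq_eq, aff_zpow, mul_zero] at hk
  rcases (by decide : ∀ a : ZMod 4, a * 2 = 0 ∨ a * 2 = 2) ((k : ZMod 4)) with h | h
  · rw [h, aff_one] at hk
    exact (hg1 hk.symm).elim
  · rw [h] at hk
    refine le_antisymm hle ?_
    rw [Subgroup.closure_le, Set.singleton_subset_iff]
    show muSq 4 (2 * p) ∈ N
    rw [muSq_eq, hk]
    exact hgN

lemma eq_closure_nuSq (hp : p.Prime) (hpo : Odd p)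
    (N : Subgroup (Equiv.Perm (ZMod 4 × ZMod (2 * p))))
    (hle : N ≤ Subgroup.closure {nuSq 4 (2 * p)}) (hbot : N ≠ ⊥) :
    N = Subgroup.closure {nuSq 4 (2 * p)} := by
  have hp3 := p_ge_three hp hpo
  obtain ⟨g, hgN, hg1⟩ := (Subgroup.bot_or_exists_ne_one N).resolve_left hbot
  have hg := hle hgN
  rw [← Subgroup.zpowers_eq_closure, Subgroup.mem_zpowers_iff] at hg
  obtain ⟨k, hk⟩ := hg
  rw [nuSq_eq, aff_zpow, mul_zero] at hk
  set e : ZMod (2 * p) := (k : ZMod (2 * p)) * 2 with he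
  have hne : e ≠ 0 := by
    intro h0
    rw [h0, aff_one] at hk
    exact (hg1 hk.symm).elim
  have hpar : e.val % 2 = 0 := by
    have h1 : e = (k : ZMod (2 * p)) + (k : ZMod (2 * p)) := by rw [he]; ring
    have h2 := val_add_mod_two' (⟨p, rfl⟩ : (2:ℕ) ∣ 2 * p) (by omega) (k : ZMod (2 * p))
      (k : ZMod (2 * p))
    rw [← h1] at h2
    omega
  have hmem : aff 4 (2 * p) false false 0 e ∈ N := by rwa [hk]
  refine le_antisymm hle ?_
  rw [Subgroup.closure_le, Set.singleton_subset_iff]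
  exact extract_nuSq hp hpo e hne hpar N hmem

/-- Key: every nontrivial normal subgroup of `H(4,2p)` contains `μ²` or `ν²`. -/
lemma key_lemma (hp : p.Prime) (hpo : Odd p)
    (N : Subgroup (Equiv.Perm (ZMod 4 × ZMod (2 * p))))
    (hN : NormalIn N (Hgroup 4 (2 * p))) (hbot : N ≠ ⊥) :
    muSq 4 (2 * p) ∈ N ∨ nuSq 4 (2 * p) ∈ N := by
  have hp3 := p_ge_three hp hpo
  haveI : NeZero (2 * p) := ⟨by omega⟩
  obtain ⟨g, hgN, hg1⟩ := (Subgroup.bot_or_exists_ne_one N).resolve_left hbot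
  obtain ⟨ε, η, c, d, rfl, hpar⟩ := mem_H_aff hp hpo g (hN.1 hgN)
  cases ε with
  | true =>
      left
      have h1 := hN.2 _ (mu_mem 4 (2 * p)) _ hgN
      have h2 := mul_mem h1 (inv_mem hgN)
      rwa [conj_mu_comm] at h2
  | false =>
    cases η with
    | true =>
        right
        have h1 := hN.2 _ (nuSq_mem 4 (2 * p)) _ hgN
        have h2 := mul_mem h1 (inv_mem hgN)
        rw [conj_nu_comm] at h2
        have h4 : ((4 : ℕ) : ZMod (2 * p)) = (4 : ZMod (2 * p)) := by norm_cast
        have h5 : ((4 : ℕ) : ZMod (2 * p)).val = 4 := ZMod.val_natCast_of_lt (by omega)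
        refine extract_nuSq hp hpo 4 ?_ ?_ N h2
        · intro h0
          rw [h4, h0] at h5
          simp at h5
        · have h6 : ((4 : ℕ) : ZMod (2 * p)).val % 2 = 0 := by rw [h5]
          rwa [h4] at h6
    | false =>
        norm_num at hpar
        by_cases hd : d = 0
        · subst hd
          left
          by_cases hc : c = 0
          · subst hc
            rw [aff_one] at hg1
            exact absurd rfl hg1
          rcases (by decide : ∀ a : ZMod 4, a ≠ 0 → 2 * a = 2 ∨ a = 2) c hc with h | h
          · have hsq : aff 4 (2 * p) false false c 0 * aff 4 (2 * p) false false c 0 =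
                muSq 4 (2 * p) := by
              rw [aff_mul, muSq_eq]
              simp only [Bool.cond_false, Bool.xor_false]
              congr 1
              · linear_combination h
              · ring
            rw [← hsq]
            exact mul_mem hgN hgN
          · rw [muSq_eq, ← h]
            exact hgN
        · right
          have h1 := hN.2 _ (sigmaNu_mem 4 (2 * p)) _ hgN
          have h2 := mul_mem h1 hgN
          rw [conj_trans] at h2
          refine extract_nuSq hp hpo (2 * d) ?_ ?_ N h2
          · intro h0
            have hq : ((2 * d.val : ℕ) : ZMod (2 * p)) = 2 * d := by
              rw [Nat.cast_mul, ZMod.natCast_zmod_val]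
              norm_num
            rw [h0] at hq
            have hdvd := (ZMod.natCast_eq_zero_iff (2 * d.val) (2 * p)).mp hq
            obtain ⟨u, hu⟩ := hdvd
            have hu' : d.val = p * u := by
              have h2' : 2 * d.val = 2 * (p * u) := by rw [hu]; ring
              omega
            have hv1 : d.val < 2 * p := ZMod.val_lt d
            have hv0 : d.val ≠ 0 := fun h => hd ((ZMod.val_eq_zero d).mp h)
            obtain ⟨w, hw⟩ := hpo
            match u, hu' with
            | 0, hu' => omega
            | 1, hu' => omega
            | (n + 2), hu' =>
              have h3' : p * 2 ≤ p * (n + 2) := Nat.mul_le_mul_left _ (by omega)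
              rw [← hu'] at h3'
              omega
          · have h1' : 2 * d = d + d := by ring
            have h2' := val_add_mod_two' (⟨p, rfl⟩ : (2:ℕ) ∣ 2 * p) (by omega) d d
            rw [← h1'] at h2'
            omega

end Main3
/-- the minimal normal subgroups of `H(4,2p)` are exactly `⟨μ²⟩` and `⟨ν²⟩`. -/
theorem stmt18 (p : ℕ) (hp : p.Prime) (hpo : Odd p)
    (M : Subgroup (Equiv.Perm (ZMod 4 × ZMod (2 * p)))) :
    IsMinimalNormalIn M (Hgroup 4 (2 * p)) ↔
      (M = Subgroup.closure {muSq 4 (2 * p)} ∨ M = Subgroup.closure {nuSq 4 (2 * p)}) := by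
  have hMu := normalIn_closure_muSq hp hpo
  have hNu := normalIn_closure_nuSq hp hpo
  constructor
  · rintro ⟨hNorm, hbot, hmin⟩
    rcases key_lemma hp hpo M hNorm hbot with hm | hm
    · left
      have h1 : Subgroup.closure {muSq 4 (2 * p)} ≤ M := by
        rw [Subgroup.closure_le, Set.singleton_subset_iff]
        exact hm
      rcases hmin _ hMu h1 with h | h
      · exact absurd h (closure_singleton_ne_bot muSq_ne_one)
      · exact h.symm
    · right
      have h1 : Subgroup.closure {nuSq 4 (2 * p)} ≤ M := by
        rw [Subgroup.closure_le, Set.singleton_subset_iff]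
        exact hm
      rcases hmin _ hNu h1 with h | h
      · exact absurd h (closure_singleton_ne_bot (nuSq_ne_one hp hpo))
      · exact h.symm
  · rintro (rfl | rfl)
    · refine ⟨hMu, closure_singleton_ne_bot muSq_ne_one, ?_⟩
      intro N hNn hle
      by_cases hb : N = ⊥
      · exact Or.inl hb
      · exact Or.inr (eq_closure_muSq N hle hb)
    · refine ⟨hNu, closure_singleton_ne_bot (nuSq_ne_one hp hpo), ?_⟩
      intro N hNn hle
      by_cases hb : N = ⊥
      · exact Or.inl hb
      · exact Or.inr (eq_closure_nuSq hp hpo N hle hb)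

end OG4
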